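/- Let G be a non-abelian finite simple group. Then b3(G), the maximum over all permutation representations of G of the minimum base size, equals the maximum over all primitive faithful actions of G on nonempty finite sets of the minimum base size; in other words, b3(G) can be calculated by considering only the primitive permutation representations of G. -/

import Mathlib

/-- A base: the pointwise stabiliser of the sequence equals the kernel of the action. -/
def IsBase (G : Type) [Group G] {Ω : Type} [MulAction G Ω] {k : ℕ} (b : Fin k → Ω) : Prop :=
  ∀ g : G, (∀ i, g • b i = b i) → ∀ ω : Ω, g • ω = ω

/-- Irredundant: no point is fixed by the pointwise stabiliser of its predecessors. -/
def IsIrredundant (G : Type) [Group G] {Ω : Type} [MulAction G Ω] {k : ℕ} (b : Fin k → Ω) : Prop :=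
  ∀ i : Fin k, ∃ g : G, (∀ j, j < i → g • b j = b j) ∧ g • b i ≠ b i

/-- Minimal: no point is fixed by the pointwise stabiliser of the other points. -/
def IsMinimal (G : Type) [Group G] {Ω : Type} [MulAction G Ω] {k : ℕ} (b : Fin k → Ω) : Prop :=
  ∀ i : Fin k, ∃ g : G, (∀ j, j ≠ i → g • b j = b j) ∧ g • b i ≠ b i

noncomputable def b1 (G : Type) [Group G] : ℕ :=
  sSup {k | ∃ (Ω : Type) (_ : Finite Ω) (m : MulAction G Ω), ∃ b : Fin k → Ω,
    @IsBase G _ Ω m k b ∧ @IsIrredundant G _ Ω m k b}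

noncomputable def b2 (G : Type) [Group G] : ℕ :=
  sSup {k | ∃ (Ω : Type) (_ : Finite Ω) (m : MulAction G Ω), ∃ b : Fin k → Ω,
    @IsBase G _ Ω m k b ∧ @IsMinimal G _ Ω m k b}

noncomputable def minBaseSize (G : Type) [Group G] (Ω : Type) [MulAction G Ω] : ℕ :=
  sInf {k | ∃ b : Fin k → Ω, IsBase G b}

noncomputable def b3 (G : Type) [Group G] : ℕ :=
  sSup {k | ∃ (Ω : Type) (_ : Finite Ω) (m : MulAction G Ω), k = @minBaseSize G _ Ω m}

/-- The length of the longest chain of subgroups of `G`. -/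
noncomputable def subgroupChainLength (G : Type) [Group G] : ℕ :=
  sSup {l | ∃ c : Fin (l + 1) → Subgroup G, StrictAnti c ∧ c 0 = ⊤ ∧ c (Fin.last l) = ⊥}

def IsFaithfulAction (G Ω : Type) [Group G] [MulAction G Ω] : Prop :=
  ∀ g : G, (∀ ω : Ω, g • ω = ω) → g = 1

def IsTransitiveAction (G Ω : Type) [Group G] [MulAction G Ω] : Prop :=
  ∀ x y : Ω, ∃ g : G, g • x = y

def IsPrimitiveAction (G Ω : Type) [Group G] [MulAction G Ω] : Prop :=
  IsTransitiveAction G Ω ∧ Nontrivial Ω ∧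
    ∀ r : Setoid Ω, (∀ (g : G) (x y : Ω), r.r x y → r.r (g • x) (g • y)) → r = ⊥ ∨ r = ⊤

def IsIndependent (G : Type) [Group G] (S : Finset G) : Prop :=
  ∀ g ∈ S, g ∉ Subgroup.closure ((S : Set G) \ {g})

noncomputable def maxIndependent (G : Type) [Group G] : ℕ :=
  sSup {n | ∃ S : Finset G, S.card = n ∧ IsIndependent G S}

def IsJoinEmbedding (G : Type) [Group G] (n : ℕ) (f : Finset (Fin n) → Subgroup G) : Prop :=
  Function.Injective f ∧ f ∅ = ⊥ ∧ ∀ I J, f (I ∪ J) = f I ⊔ f J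

def IsMeetEmbedding (G : Type) [Group G] (n : ℕ) (f : Finset (Fin n) → Subgroup G) : Prop :=
  Function.Injective f ∧ f ∅ = ⊤ ∧ ∀ I J, f (I ∪ J) = f I ⊓ f J

-- AUX
lemma relBase_aux (G : Type) [Group G] [Finite G] (Ω : Type) [MulAction G Ω] :
    ∀ (n : ℕ) (K : Subgroup G), Nat.card K ≤ n →
    ∃ k ≤ n, ∃ b : Fin k → Ω, ∀ g ∈ K, (∀ i, g • b i = b i) → ∀ ω : Ω, g • ω = ω := by
  intro n
  induction n with
  | zero =>
    intro K hK
    have : 0 < Nat.card K := Nat.card_pos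
    omega
  | succ n ih =>
    intro K hK
    by_cases h : ∀ g ∈ K, ∀ ω : Ω, g • ω = ω
    · exact ⟨0, by omega, Fin.elim0, fun g hg _ => h g hg⟩
    · push_neg at h
      obtain ⟨g0, hg0K, ω0, hg0⟩ := h
      have hss : ((K ⊓ MulAction.stabilizer G ω0 : Subgroup G) : Set G) ⊂ (K : Set G) := by
        rw [SetLike.coe_ssubset_coe]
        refine lt_of_le_of_ne inf_le_left ?_
        intro he
        have hm : g0 ∈ K ⊓ MulAction.stabilizer G ω0 := by rw [he]; exact hg0K
        exact hg0 (Subgroup.mem_inf.mp hm).2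
      have hlt : Nat.card ↥(K ⊓ MulAction.stabilizer G ω0) < Nat.card K := by
        have := Set.ncard_lt_ncard hss (Set.toFinite _)
        rw [← Nat.card_coe_set_eq, ← Nat.card_coe_set_eq] at this
        exact this
      obtain ⟨k, hk, b', hb'⟩ := ih (K ⊓ MulAction.stabilizer G ω0) (by omega)
      refine ⟨k + 1, by omega, Fin.cons ω0 b', ?_⟩
      intro g hg hfix ω
      have h0 : g • ω0 = ω0 := by simpa using hfix 0
      exact hb' g (Subgroup.mem_inf.mpr ⟨hg, MulAction.mem_stabilizer_iff.mpr h0⟩)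
        (fun j => by simpa using hfix j.succ) ω

lemma minBaseSize_le_card (G : Type) [Group G] [Finite G] (Ω : Type) [MulAction G Ω] :
    minBaseSize G Ω ≤ Nat.card G := by
  obtain ⟨k, hk, b, hb⟩ := relBase_aux G Ω (Nat.card G) ⊤ (le_of_eq Subgroup.card_top)
  exact le_trans (Nat.sInf_le ⟨b, fun g h => hb g (Subgroup.mem_top g) h⟩) hk

lemma quotient_faithful (G : Type) [Group G] (hsimple : IsSimpleGroup G)
    (M : Subgroup G) (hMne : M ≠ ⊤) :
    ∀ g : G, (∀ x : G ⧸ M, g • x = x) → g = 1 := by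
  let N : Subgroup G :=
    { carrier := {g : G | ∀ x : G ⧸ M, g • x = x}
      one_mem' := fun x => one_smul _ _
      mul_mem' := fun {a b} ha hb x => by rw [mul_smul, hb, ha]
      inv_mem' := fun {a} ha x => by
        conv_lhs => rw [← ha x]
        rw [← mul_smul, inv_mul_cancel, one_smul] }
  have hNnormal : N.Normal := by
    constructor
    intro n hn g x
    show (g * n * g⁻¹) • x = x
    rw [mul_smul, mul_smul, hn (g⁻¹ • x), ← mul_smul, mul_inv_cancel, one_smul]
  have hNle : N ≤ M := by
    intro g hg
    have h1 : ((g * 1 : G) : G ⧸ M) = ((1 : G) : G ⧸ M) := hg ((1 : G) : G ⧸ M)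
    have h2 := QuotientGroup.eq.mp h1
    simpa using h2
  rcases hsimple.eq_bot_or_eq_top_of_normal N hNnormal with hbot | htop
  · intro g hg
    have : g ∈ N := hg
    rw [hbot] at this
    exact this
  · exact absurd (top_le_iff.mp (htop ▸ hNle)) hMne

lemma quotient_primitive (G : Type) [Group G] (M : Subgroup G) (hM : IsCoatom M) :
    IsPrimitiveAction G (G ⧸ M) := by
  obtain ⟨g1, hg1⟩ : ∃ g : G, g ∉ M := by
    by_contra h
    push_neg at h
    exact hM.1 ((Subgroup.eq_top_iff' M).mpr h)
  refine ⟨?_, ?_, ?_⟩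
  · -- transitive
    intro x y
    induction x using QuotientGroup.induction_on with | H a =>
    induction y using QuotientGroup.induction_on with | H b =>
    exact ⟨b * a⁻¹, congrArg (QuotientGroup.mk) (inv_mul_cancel_right b a)⟩
  · -- nontrivial
    refine ⟨((g1 : G ⧸ M)), ((1 : G) : G ⧸ M), fun h => ?_⟩
    have := QuotientGroup.eq.mp h
    simp only [mul_one] at this
    exact hg1 (M.inv_mem_iff.mp this)
  · -- setoid
    intro r hr
    let K : Subgroup G :=
      { carrier := {g : G | r.r ((g : G ⧸ M)) (((1 : G) : G ⧸ M))}
        one_mem' := r.refl _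
        mul_mem' := fun {a b} ha hb => by
          have h2 : r.r ((a * b : G) : G ⧸ M) ((a * 1 : G) : G ⧸ M) :=
            hr a ((b : G) : G ⧸ M) (((1 : G)) : G ⧸ M) hb
          rw [mul_one] at h2
          exact r.trans h2 ha
        inv_mem' := fun {a} ha => by
          have h2 : r.r ((a⁻¹ * a : G) : G ⧸ M) ((a⁻¹ * 1 : G) : G ⧸ M) :=
            hr a⁻¹ _ _ ha
          rw [inv_mul_cancel, mul_one] at h2
          exact r.symm h2 }
    have hMK : M ≤ K := by
      intro m hm
      have : ((m : G) : G ⧸ M) = ((1 : G) : G ⧸ M) :=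
        QuotientGroup.eq.mpr (by simpa using M.inv_mem hm)
      show r.r ((m : G) : G ⧸ M) _
      rw [this]
    rcases lt_or_eq_of_le hMK with hlt | heq
    · -- K = ⊤ : r = ⊤
      have hKtop : K = ⊤ := hM.2 K hlt
      right
      refine Setoid.ext fun x y => ?_
      constructor
      · intro _; trivial
      · intro _
        induction x using QuotientGroup.induction_on with | H a =>
        induction y using QuotientGroup.induction_on with | H b =>
        have ha : r.r ((a : G) : G ⧸ M) (((1 : G)) : G ⧸ M) := by
          have : a ∈ K := by rw [hKtop]; trivial
          exact this
        have hb : r.r ((b : G) : G ⧸ M) (((1 : G)) : G ⧸ M) := by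
          have : b ∈ K := by rw [hKtop]; trivial
          exact this
        exact r.trans ha (r.symm hb)
    · -- K = M : r = ⊥
      left
      refine Setoid.ext fun x y => ?_
      constructor
      · intro h
        induction x using QuotientGroup.induction_on with | H a =>
        induction y using QuotientGroup.induction_on with | H b =>
        have h2 : r.r ((a⁻¹ * a : G) : G ⧸ M) ((a⁻¹ * b : G) : G ⧸ M) := hr a⁻¹ _ _ h
        rw [inv_mul_cancel] at h2
        have h3 : a⁻¹ * b ∈ K := r.symm h2
        rw [← heq] at h3
        exact QuotientGroup.eq.mpr h3
      · intro h
        rw [h]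


/-- for a non-abelian finite simple group G, b3(G) equals the maximum of the
minimum base size over the primitive faithful actions of G on nonempty finite sets. -/
theorem b3_via_primitive (G : Type) [Group G] [Finite G]
    (hsimple : IsSimpleGroup G) (hnonab : ¬ ∀ a b : G, a * b = b * a) :
    b3 G = sSup {k | ∃ (Ω' : Type) (_ : Finite Ω') (m' : MulAction G Ω'), Nonempty Ω' ∧
      @IsFaithfulAction G Ω' _ m' ∧ @IsPrimitiveAction G Ω' _ m' ∧
      k = @minBaseSize G _ Ω' m'} := by
  classical
  haveI := hsimple
  set S3 : Set ℕ := {k | ∃ (Ω : Type) (_ : Finite Ω) (m : MulAction G Ω),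
    k = @minBaseSize G _ Ω m} with hS3
  set SP : Set ℕ := {k | ∃ (Ω' : Type) (_ : Finite Ω') (m' : MulAction G Ω'), Nonempty Ω' ∧
      @IsFaithfulAction G Ω' _ m' ∧ @IsPrimitiveAction G Ω' _ m' ∧
      k = @minBaseSize G _ Ω' m'} with hSPdef
  have hb3 : b3 G = sSup S3 := rfl
  have hbdd : BddAbove S3 := by
    refine ⟨Nat.card G, ?_⟩
    rintro k ⟨Ω, fΩ, mΩ, rfl⟩
    exact minBaseSize_le_card G Ω
  -- 0 ∈ S3 via trivial action on PUnit
  have h0mem : (0 : ℕ) ∈ S3 := by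
    refine ⟨PUnit, inferInstance, inferInstance, ?_⟩
    show (0 : ℕ) = sInf {k | ∃ b : Fin k → PUnit, IsBase G b}
    have hb0 : ∃ b : Fin 0 → PUnit, IsBase G b :=
      ⟨Fin.elim0, fun g _ ω => Subsingleton.elim _ _⟩
    exact (Nat.sInf_eq_zero.mpr (Or.inl hb0)).symm
  -- 1 ∈ S3 via regular action
  have h1mem : (1 : ℕ) ∈ S3 := by
    refine ⟨G, inferInstance, inferInstance, ?_⟩
    have h1 : (1 : ℕ) ∈ {k | ∃ b : Fin k → G, IsBase G b} := by
      refine ⟨fun _ => (1 : G), fun g h ω => ?_⟩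
      have := h 0
      rw [smul_eq_mul, mul_one] at this
      rw [this, one_smul]
    have h0 : (0 : ℕ) ∉ {k | ∃ b : Fin k → G, IsBase G b} := by
      rintro ⟨b, hb⟩
      obtain ⟨g, hg⟩ := exists_ne (1 : G)
      have := hb g (fun i => i.elim0) 1
      rw [smul_eq_mul, mul_one] at this
      exact hg this
    have : minBaseSize G G ≠ 0 := by
      rw [minBaseSize, Ne, Nat.sInf_eq_zero]
      rintro (h | h)
      · exact h0 h
      · rw [h] at h1
        exact h1
    have hle : minBaseSize G G ≤ 1 := Nat.sInf_le h1
    omega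
  have hb3mem : b3 G ∈ S3 := by rw [hb3]; exact Nat.sSup_mem ⟨0, h0mem⟩ hbdd
  have hb3pos : 1 ≤ b3 G := by rw [hb3]; exact le_csSup hbdd h1mem
  obtain ⟨Ω, fΩ, mΩ, hk⟩ := hb3mem
  -- there is a point not fixed by everything
  have hnt : ∃ (ω0 : Ω) (g0 : G), g0 • ω0 ≠ ω0 := by
    by_contra h
    push_neg at h
    have : minBaseSize G Ω = 0 :=
      Nat.sInf_eq_zero.mpr (Or.inl ⟨Fin.elim0, fun g _ ω => h ω g⟩)
    omega
  obtain ⟨ω0, g0, hg0⟩ := hnt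
  -- maximal subgroup above the stabilizer
  haveI : IsCoatomic (Subgroup G) := Finite.to_isCoatomic
  rcases eq_top_or_exists_le_coatom (MulAction.stabilizer G ω0) with htop | ⟨M, hM, hHM⟩
  · exfalso
    have hmem : g0 ∈ MulAction.stabilizer G ω0 := by rw [htop]; trivial
    exact hg0 (MulAction.mem_stabilizer_iff.mp hmem)
  have hMne : M ≠ ⊤ := hM.1
  have hfaith := quotient_faithful G hsimple M hMne
  have hprim := quotient_primitive G M hM
  -- min base size of G ⧸ M : the base set is nonempty
  have hne : {k | ∃ b : Fin k → G ⧸ M, IsBase G b}.Nonempty := by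
    obtain ⟨n, ⟨e⟩⟩ := Finite.exists_equiv_fin (G ⧸ M)
    refine ⟨n, e.symm, fun g hfix x => ?_⟩
    have := hfix (e x)
    rwa [e.symm_apply_apply] at this
  have hmmem : minBaseSize G (G ⧸ M) ∈ {k | ∃ b : Fin k → G ⧸ M, IsBase G b} :=
    Nat.sInf_mem hne
  obtain ⟨b', hb'⟩ := hmmem
  have hsurj : Function.Surjective (fun g : G => ((g : G ⧸ M))) := fun x =>
    QuotientGroup.induction_on x (fun z => ⟨z, rfl⟩)
  choose rep hrep using fun i => hsurj (b' i)
  -- transfer the base to Ω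
  have hle : minBaseSize G Ω ≤ minBaseSize G (G ⧸ M) := by
    refine Nat.sInf_le ⟨fun i => rep i • ω0, fun g hfix ω => ?_⟩
    have hfixq : ∀ i, g • b' i = b' i := by
      intro i
      have h1 : g • rep i • ω0 = rep i • ω0 := hfix i
      have h2 : ((rep i)⁻¹ * g * rep i) • ω0 = ω0 := by
        rw [mul_smul, mul_smul, h1, ← mul_smul, inv_mul_cancel, one_smul]
      have h3 : (rep i)⁻¹ * g * rep i ∈ M := hHM (MulAction.mem_stabilizer_iff.mpr h2)
      have h4 : (g * rep i)⁻¹ * rep i ∈ M := by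
        have := M.inv_mem h3
        simpa [mul_inv_rev, mul_assoc] using this
      rw [← hrep i]
      exact QuotientGroup.eq.mpr h4
    have hg1 : g = 1 := hfaith g (hb' g hfixq)
    rw [hg1, one_smul]
  have hjmem : minBaseSize G (G ⧸ M) ∈ SP :=
    ⟨G ⧸ M, inferInstance, inferInstance, ⟨((1 : G) : G ⧸ M)⟩, hfaith, hprim, rfl⟩
  have hSPsub : SP ⊆ S3 := by
    rintro k ⟨Ω', f', m', -, -, -, hk'⟩
    exact ⟨Ω', f', m', hk'⟩
  apply le_antisymm
  · calc b3 G = minBaseSize G Ω := hk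
      _ ≤ minBaseSize G (G ⧸ M) := hle
      _ ≤ sSup SP := le_csSup (hbdd.mono hSPsub) hjmem
  · rw [hb3]
    exact csSup_le_csSup hbdd ⟨_, hjmem⟩ hSPsub
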